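/- Greedy decomposition into minimal acceptors: let H be a confluent horizontal automaton with initial state p₀ and a designated set of final states. Call a nonempty multiset M a minimal acceptor at state p if (p, M) →* (p', ∅) for some final p' but no proper nonempty sub-multiset of M rewrites from p to a final state with empty remainder. Then a multiset M satisfies (p₀, M) →* (p, ∅) for some final p if and only if M admits a partition M = M₀ + M₁ + ⋯ + M_k into minimal acceptors, where M₀ is a minimal acceptor at p₀ reaching some final p₁, M₁ is a minimal acceptor at p₁, and so on. -/

import Mathlib

open Relation

/-- One step of horizontal rewriting: `(p, M + {d}) → (p′, M)` if some
transition `(p, φ, p′)` has `d ⊨ φ`. -/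
def HStep {P D : Type*} (rules : Set (P × (D → Prop) × P)) :
    P × Multiset D → P × Multiset D → Prop :=
  fun c c' => ∃ d φ, (c.1, φ, c'.1) ∈ rules ∧ φ d ∧ c.2 = c'.2 + {d}

/-- Failure-extended horizontal rewriting on `Option (P × Multiset D)`, with
`none` the failure element ⊥. -/
def HStepX {P D : Type*} (rules : Set (P × (D → Prop) × P)) :
    Option (P × Multiset D) → Option (P × Multiset D) → Prop :=
  fun c c' =>
    (∃ a b, c = some a ∧ c' = some b ∧ HStep rules a b) ∨
    (∃ a, c = some a ∧ c' = none ∧ a.2 ≠ 0 ∧ ∀ b, ¬ HStep rules a b)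

/-- `M` rewrites from `p` to some final state with empty remainder. -/
def AcceptsFrom {P D : Type*} (rules : Set (P × (D → Prop) × P)) (F : Set P)
    (p : P) (M : Multiset D) : Prop :=
  ∃ p' ∈ F, ReflTransGen (HStep rules) (p, M) (p', 0)

/-- A minimal acceptor at state `p`: a nonempty multiset rewriting from `p` to
a final state with empty remainder, none of whose proper nonempty
sub-multisets does. -/
def MinAcc {P D : Type*} (rules : Set (P × (D → Prop) × P)) (F : Set P)
    (p : P) (M : Multiset D) : Prop :=
  M ≠ 0 ∧ AcceptsFrom rules F p M ∧
    ∀ M' < M, M' ≠ 0 → ¬ AcceptsFrom rules F p M'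


section Aux

variable {P D : Type*} {rules : Set (P × (D → Prop) × P)} {F : Set P}

/-- The decomposition property (RHS of the theorem). -/
def Decomp (rules : Set (P × (D → Prop) × P)) (F : Set P) (p₀ : P) (M : Multiset D) : Prop :=
  ∃ (k : ℕ) (Ms : Fin k → Multiset D) (ps : Fin (k + 1) → P),
    ps 0 = p₀ ∧ M = ∑ i : Fin k, Ms i ∧
    (∀ i : Fin k,
      MinAcc rules F (ps i.castSucc) (Ms i) ∧
      ReflTransGen (HStep rules) (ps i.castSucc, Ms i) (ps i.succ, 0) ∧
      ps i.succ ∈ F) ∧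
    ps (Fin.last k) ∈ F

lemma hstep_lift (R : Multiset D) {c c' : P × Multiset D}
    (h : ReflTransGen (HStep rules) c c') :
    ReflTransGen (HStep rules) (c.1, c.2 + R) (c'.1, c'.2 + R) := by
  induction h with
  | refl => exact .refl
  | tail h1 h2 ih =>
    refine ih.tail ?_
    obtain ⟨d, φ, hr, hd, he⟩ := h2
    exact ⟨d, φ, hr, hd, by simp [he, add_right_comm]⟩

lemma no_hstep_empty {p : P} {c : P × Multiset D} : ¬ HStep rules (p, (0 : Multiset D)) c := by
  rintro ⟨d, φ, _, _, he⟩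
  simpa using congrArg Multiset.card he

lemma accepts_empty {p p' : P}
    (h : ReflTransGen (HStep rules) (p, (0 : Multiset D)) (p', 0)) : p' = p := by
  rcases h.cases_head with h | ⟨c, hc, _⟩
  · exact congrArg Prod.fst h.symm
  · exact absurd hc no_hstep_empty

lemma no_hstepX_empty {p : P} {y : Option (P × Multiset D)} :
    ¬ HStepX rules (some (p, (0 : Multiset D))) y := by
  rintro (⟨a, b, ha, hb, hs⟩ | ⟨a, ha, _, hne, _⟩)
  · obtain rfl : (p, (0 : Multiset D)) = a := Option.some_injective _ ha
    exact no_hstep_empty hs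
  · obtain rfl : (p, (0 : Multiset D)) = a := Option.some_injective _ ha
    exact hne rfl

lemma hstepX_normal_empty {p : P} {w : Option (P × Multiset D)}
    (h : ReflTransGen (HStepX rules) (some (p, (0 : Multiset D))) w) :
    w = some (p, 0) := by
  induction h with
  | refl => rfl
  | tail h1 h2 ih => exact absurd (ih ▸ h2) no_hstepX_empty

lemma no_hstepX_none {y : Option (P × Multiset D)} : ¬ HStepX rules none y := by
  rintro (⟨a, b, ha, _, _⟩ | ⟨a, ha, _, _, _⟩) <;> exact nomatch ha

lemma hstepX_to_hstep : ∀ {x y : Option (P × Multiset D)},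
    ReflTransGen (HStepX rules) x y → ∀ a b, x = some a → y = some b →
    ReflTransGen (HStep rules) a b := by
  intro x y h
  induction h with
  | refl =>
    rintro a b rfl hy
    cases Option.some_injective _ hy
    exact .refl
  | @tail z w h1 h2 ih =>
    intro a b hx hy
    subst hx; subst hy
    rcases h2 with ⟨u, v, hu, hv, hs⟩ | ⟨u, hu, hv, _, _⟩
    · cases hu
      cases Option.some_injective _ hv
      exact (ih a u rfl rfl).tail hs
    · exact nomatch hv

lemma hstep_to_hstepX {a b : P × Multiset D}
    (h : ReflTransGen (HStep rules) a b) :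
    ReflTransGen (HStepX rules) (some a) (some b) := by
  induction h with
  | refl => exact .refl
  | tail h1 h2 ih => exact ih.tail (Or.inl ⟨_, _, rfl, rfl, h2⟩)

lemma exists_minAcc : ∀ (n : ℕ) (M : Multiset D) (p : P), M.card ≤ n → M ≠ 0 →
    AcceptsFrom rules F p M → ∃ M₀, M₀ ≤ M ∧ MinAcc rules F p M₀ := by
  intro n
  induction n with
  | zero =>
    intro M p hc hne _
    exact absurd (Multiset.card_eq_zero.mp (Nat.le_zero.mp hc)) hne
  | succ n ih =>
    intro M p hc hne hacc
    by_cases h : ∀ M' < M, M' ≠ 0 → ¬ AcceptsFrom rules F p M'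
    · exact ⟨M, le_refl _, hne, hacc, h⟩
    · push_neg at h
      obtain ⟨M', hlt, hne', hacc'⟩ := h
      obtain ⟨M₀, hle, hmin⟩ := ih M' p
        (Nat.le_of_lt_succ (lt_of_lt_of_le (Multiset.card_lt_card hlt) hc)) hne' hacc'
      exact ⟨M₀, hle.trans hlt.le, hmin⟩

lemma decomp_nil {p : P} (hF : p ∈ F) : Decomp rules F p (0 : Multiset D) := by
  refine ⟨0, Fin.elim0, fun _ => p, rfl, by simp, fun i => i.elim0, hF⟩

lemma decomp_cons {p p₁ : P} {M₀ M' : Multiset D}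
    (hmin : MinAcc rules F p M₀)
    (hpath : ReflTransGen (HStep rules) (p, M₀) (p₁, 0))
    (hF : p₁ ∈ F) (hd : Decomp rules F p₁ M') :
    Decomp rules F p (M₀ + M') := by
  obtain ⟨k, Ms, ps, h0, hsum, hseg, hlast⟩ := hd
  refine ⟨k + 1, Fin.cons M₀ Ms, Fin.cons p ps, Fin.cons_zero _ _, ?_, ?_, ?_⟩
  · rw [Fin.sum_cons, hsum]
  · intro i
    refine Fin.cases ?_ ?_ i
    · constructor
      · simpa using hmin
      · constructor
        · simpa [h0] using hpath
        · simpa [h0] using hF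
    · intro j
      have e1 : (j.succ : Fin (k+1)).castSucc = (j.castSucc : Fin (k+1)).succ :=
        (Fin.succ_castSucc j).symm
      rw [e1]
      simpa using hseg j
  · have : Fin.last (k + 1) = (Fin.last k).succ := (Fin.succ_last k).symm
    rw [this]
    simpa using hlast

lemma decomp_accepts : ∀ (k : ℕ) (Ms : Fin k → Multiset D) (ps : Fin (k+1) → P),
    (∀ i : Fin k,
      MinAcc rules F (ps i.castSucc) (Ms i) ∧
      ReflTransGen (HStep rules) (ps i.castSucc, Ms i) (ps i.succ, 0) ∧
      ps i.succ ∈ F) →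
    ps (Fin.last k) ∈ F →
    AcceptsFrom rules F (ps 0) (∑ i : Fin k, Ms i) := by
  intro k
  induction k with
  | zero =>
    intro Ms ps _ hlast
    have h00 : Fin.last 0 = (0 : Fin 1) := rfl
    rw [h00] at hlast
    refine ⟨ps 0, hlast, ?_⟩
    have hs : (∑ i : Fin 0, Ms i) = 0 := by simp
    rw [hs]
  | succ k ih =>
    intro Ms ps hseg hlast
    have hrec := ih (fun i => Ms i.succ) (fun i => ps i.succ) ?_ ?_
    · obtain ⟨p', hp'F, hpath'⟩ := hrec
      set rest := ∑ i : Fin k, Ms i.succ with hrest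
      have h0 := hseg 0
      have hlift := hstep_lift (rules := rules) rest h0.2.1
      simp only at hlift
      refine ⟨p', hp'F, ?_⟩
      have hsum : ∑ i : Fin (k+1), Ms i = Ms 0 + rest := by
        rw [Fin.sum_univ_succ]
      rw [hsum]
      have hlift' : ReflTransGen (HStep rules) (ps (0 : Fin (k+1)).castSucc, Ms 0 + rest)
          (ps (0 : Fin (k+1)).succ, rest) := by simpa using hlift
      have : ps (0 : Fin (k+1)).castSucc = ps 0 := by norm_num
      rw [this] at hlift'
      exact hlift'.trans hpath'
    · intro i
      have e1 : (i.succ : Fin (k+1)).castSucc = (i.castSucc : Fin (k+1)).succ :=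
        (Fin.succ_castSucc i).symm
      have := hseg i.succ
      rw [e1] at this
      exact this
    · show ps (Fin.last k).succ ∈ F
      rw [Fin.succ_last]
      exact hlast

lemma forward_decomp
    (hconf : ∀ x y z, ReflTransGen (HStepX rules) x y → ReflTransGen (HStepX rules) x z →
      ∃ w, ReflTransGen (HStepX rules) y w ∧ ReflTransGen (HStepX rules) z w) :
    ∀ (n : ℕ) (M : Multiset D) (p : P), M.card ≤ n →
    AcceptsFrom rules F p M → Decomp rules F p M := by
  intro n
  induction n with
  | zero =>
    intro M p hc hacc
    have hM : M = 0 := Multiset.card_eq_zero.mp (Nat.le_zero.mp hc)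
    subst hM
    obtain ⟨p', hp'F, hpath⟩ := hacc
    exact decomp_nil (accepts_empty hpath ▸ hp'F)
  | succ n ih =>
    intro M p hc hacc
    by_cases hM : M = 0
    · subst hM
      obtain ⟨p', hp'F, hpath⟩ := hacc
      exact decomp_nil (accepts_empty hpath ▸ hp'F)
    · obtain ⟨M₀, hle, hmin⟩ := exists_minAcc M.card M p le_rfl hM hacc
      obtain ⟨R, rfl⟩ := Multiset.le_iff_exists_add.mp hle
      obtain ⟨hM₀ne, ⟨p₁, hp₁F, hpath₀⟩, hminimal⟩ := hmin
      have hliftA : ReflTransGen (HStep rules) (p, M₀ + R) (p₁, R) := by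
        have := hstep_lift (rules := rules) R hpath₀
        simpa using this
      obtain ⟨p', hp'F, hpathM⟩ := hacc
      obtain ⟨w, hw1, hw2⟩ := hconf (some (p, M₀ + R)) (some (p', 0)) (some (p₁, R))
        (hstep_to_hstepX hpathM) (hstep_to_hstepX hliftA)
      have hw : w = some (p', 0) := hstepX_normal_empty hw1
      subst hw
      have hacc1 : AcceptsFrom rules F p₁ R := ⟨p', hp'F, hstepX_to_hstep hw2 _ _ rfl rfl⟩
      have hcard : R.card ≤ n := by
        have h1 : (M₀ + R).card = M₀.card + R.card := Multiset.card_add _ _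
        have h2 : 0 < M₀.card := Multiset.card_pos.mpr hM₀ne
        omega
      exact decomp_cons ⟨hM₀ne, ⟨p₁, hp₁F, hpath₀⟩, hminimal⟩ hpath₀ hp₁F (ih R p₁ hcard hacc1)

end Aux

/-- Greedy decomposition into minimal acceptors: under confluence of the
failure-extended rewriting, `M` is accepted from `p₀` iff `M` is a sum
`M₀ + ⋯ + M_{k-1}` of minimal acceptors chained through final states
`p₁, …, p_k`, ending in a final state. -/
theorem stmt16 {P D : Type*} (rules : Set (P × (D → Prop) × P)) (F : Set P)
    (hconf : ∀ x y z, ReflTransGen (HStepX rules) x y → ReflTransGen (HStepX rules) x z →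
      ∃ w, ReflTransGen (HStepX rules) y w ∧ ReflTransGen (HStepX rules) z w)
    (p₀ : P) (M : Multiset D) :
    AcceptsFrom rules F p₀ M ↔
      ∃ (k : ℕ) (Ms : Fin k → Multiset D) (ps : Fin (k + 1) → P),
        ps 0 = p₀ ∧ M = ∑ i : Fin k, Ms i ∧
        (∀ i : Fin k,
          MinAcc rules F (ps i.castSucc) (Ms i) ∧
          ReflTransGen (HStep rules) (ps i.castSucc, Ms i) (ps i.succ, 0) ∧
          ps i.succ ∈ F) ∧
        ps (Fin.last k) ∈ F := by
  
  constructor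
  · intro hacc
    exact forward_decomp hconf M.card M p₀ le_rfl hacc
  · rintro ⟨k, Ms, ps, h0, hsum, hseg, hlast⟩
    rw [hsum, ← h0]
    exact decomp_accepts k Ms ps hseg hlast
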